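/- Let (X_t) be a continuous-time simple symmetric random walk on ℤ with generator (1/2)Δ. For every λ ∈ ℝ and T > 0 there exists C(λ,T) such that for all n ∈ ℕ, k ∈ ℤ, t ∈ [0,T], E[exp(-λ|X_{n²t} + k|/n)] ≤ C(λ,T) exp(-λ|k|/n). -/

import Mathlib

open MeasureTheory Set

/-- Number of nearest-neighbour paths of length `m` on `ℤ` from `0` to `x`. -/
def pathCount (m : ℕ) (x : ℤ) : ℕ :=
  if ((m : ℤ) + x) % 2 = 0 ∧ x.natAbs ≤ m then Nat.choose m (((m : ℤ) + x).toNat / 2) else 0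

/-- Transition kernel of the rate-1 continuous-time simple symmetric random walk on `ℤ`
(generator `(1/2)Δ`): `^dp_t(x) = P₀(X_t = x) = e^{-t} Σ_m (t^m/m!) P(S_m = x)`. -/
noncomputable def srwKernel (t : ℝ) (x : ℤ) : ℝ :=
  Real.exp (-t) * ∑' m : ℕ, t ^ m / (m.factorial : ℝ) * (pathCount m x : ℝ) / 2 ^ m

lemma pathCount_support {m : ℕ} {x : ℤ} (h : pathCount m x ≠ 0) :
    x ∈ (Finset.range (m+1)).image (fun j : ℕ => 2*(j:ℤ) - m) := by
  unfold pathCount at h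
  split_ifs at h with hc
  · obtain ⟨hpar, habs⟩ := hc
    refine Finset.mem_image.mpr ⟨((m:ℤ)+x).toNat / 2, Finset.mem_range.mpr ?_, ?_⟩ <;> omega
  · exact absurd rfl h

lemma pathCount_apply (m j : ℕ) (hj : j ≤ m) : pathCount m (2*(j:ℤ) - m) = m.choose j := by
  unfold pathCount
  rw [if_pos ⟨by omega, by omega⟩]
  congr 1
  omega

lemma key_sum (m : ℕ) (μ : ℝ) :
    ∑' x : ℤ, (pathCount m x : ℝ) * Real.exp (μ * x)
      = (Real.exp μ + Real.exp (-μ))^m := by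
  have hsupp : ∀ x ∉ (Finset.range (m+1)).image (fun j : ℕ => 2*(j:ℤ) - m),
      (pathCount m x : ℝ) * Real.exp (μ * x) = 0 := by
    intro x hx
    have : pathCount m x = 0 := by
      by_contra h; exact hx (pathCount_support h)
    simp [this]
  rw [tsum_eq_sum hsupp, Finset.sum_image (fun a _ b _ hab => by omega), add_pow]
  refine Finset.sum_congr rfl fun j hj => ?_
  have hj' : j ≤ m := by simpa using Nat.lt_succ_iff.mp (Finset.mem_range.mp hj)
  rw [pathCount_apply m j hj', ← Real.exp_nat_mul, ← Real.exp_nat_mul, ← Real.exp_add, mul_comm]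
  congr 1
  push_cast [hj']
  ring

lemma summable_pathCount_mul (m : ℕ) (f : ℤ → ℝ) :
    Summable (fun x : ℤ => (pathCount m x : ℝ) * f x) := by
  apply summable_of_ne_finset_zero
    (s := (Finset.range (m+1)).image (fun j : ℕ => 2*(j:ℤ) - m))
  intro x hx
  have : pathCount m x = 0 := by
    by_contra h; exact hx (pathCount_support h)
  simp [this]

lemma exp_abs_le (μ : ℝ) (x : ℝ) :
    Real.exp (μ * |x|) ≤ Real.exp (μ * x) + Real.exp (μ * (-x)) := by
  rcases abs_choice x with h | h <;> rw [h]
  · exact le_add_of_nonneg_right (Real.exp_pos _).le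
  · exact le_add_of_nonneg_left (Real.exp_pos _).le

lemma key_sum_abs_le (m : ℕ) (μ : ℝ) :
    ∑' x : ℤ, (pathCount m x : ℝ) * Real.exp (μ * |(x:ℝ)|)
      ≤ 2 * (Real.exp μ + Real.exp (-μ))^m := by
  have h1 : ∑' x : ℤ, (pathCount m x : ℝ) * Real.exp (μ * |(x:ℝ)|)
      ≤ ∑' x : ℤ, ((pathCount m x : ℝ) * Real.exp (μ * x)
          + (pathCount m x : ℝ) * Real.exp ((-μ) * x)) := by
    refine Summable.tsum_le_tsum (fun x => ?_) (summable_pathCount_mul m _)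
      ((summable_pathCount_mul m _).add (summable_pathCount_mul m _))
    have h : Real.exp (μ * |(x:ℝ)|) ≤ Real.exp (μ * x) + Real.exp ((-μ) * x) := by
      simpa [neg_mul, mul_neg] using exp_abs_le μ (x : ℝ)
    have h' := mul_le_mul_of_nonneg_left h (by positivity : (0:ℝ) ≤ (pathCount m x : ℝ))
    rw [mul_add] at h'
    exact h'
  rw [Summable.tsum_add (summable_pathCount_mul m _) (summable_pathCount_mul m _),
    key_sum m μ, key_sum m (-μ)] at h1
  rw [neg_neg] at h1
  calc _ ≤ _ := h1
  _ = 2 * (Real.exp μ + Real.exp (-μ))^m := by rw [add_comm (Real.exp (-μ))]; ring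

lemma tsum_pow_div_factorial (x : ℝ) : ∑' n : ℕ, x ^ n / (n.factorial : ℝ) = Real.exp x := by
  rw [Real.exp_eq_exp_ℝ, NormedSpace.exp_eq_tsum_div]

/-- Uniform upper bound under diffusive rescaling: for `λ ∈ ℝ` and `T > 0` there is
`C(λ,T)` with `E[exp(-λ|X_{n²t}+k|/n)] ≤ C(λ,T) exp(-λ|k|/n)` for all `n ≥ 1`, `k ∈ ℤ`,
`t ∈ [0,T]`. -/
theorem srw_rescaled_exp_upper_bound (lam T : ℝ) (hT : 0 < T) :
    ∃ C : ℝ, ∀ n : ℕ, 0 < n → ∀ k : ℤ, ∀ t ∈ Icc (0 : ℝ) T,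
      (∑' x : ℤ, srwKernel ((n : ℝ) ^ 2 * t) x * Real.exp (-lam * |(x : ℝ) + (k : ℝ)| / n))
        ≤ C * Real.exp (-lam * |(k : ℝ)| / n) := by
  refine ⟨2 * Real.exp (T * lam ^ 2 * Real.exp |lam| / 2), ?_⟩
  intro n hn k t ht
  have hn1 : (1 : ℝ) ≤ n := by exact_mod_cast hn
  have hnpos : (0 : ℝ) < n := by positivity
  set s : ℝ := (n : ℝ) ^ 2 * t with hs_def
  have hs0 : 0 ≤ s := mul_nonneg (by positivity) ht.1
  set μ : ℝ := |lam| / n with hμ_def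
  have hμ0 : 0 ≤ μ := by positivity
  set b : ℝ := Real.exp μ + Real.exp (-μ) with hb_def
  have hb0 : 0 < b := by positivity
  -- the double-indexed summand
  set g : ℕ × ℤ → ℝ := fun p =>
    s ^ p.1 / (p.1.factorial : ℝ) * (pathCount p.1 p.2 : ℝ) / 2 ^ p.1
      * Real.exp (μ * |(p.2 : ℝ)|) with hg_def
  have hg0 : ∀ p, 0 ≤ g p := fun p => by
    have := Real.exp_pos (μ * |(p.2 : ℝ)|)
    positivity
  have hfib_sum : ∀ m : ℕ, Summable (fun x : ℤ => g (m, x)) := by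
    intro m
    have : (fun x : ℤ => g (m, x)) = fun x : ℤ => (pathCount m x : ℝ)
        * (s ^ m / (m.factorial : ℝ) / 2 ^ m * Real.exp (μ * |(x : ℝ)|)) := by
      funext x; simp only [hg_def]; ring
    rw [this]
    exact summable_pathCount_mul m _
  have hfib_bound : ∀ m : ℕ, ∑' x : ℤ, g (m, x) ≤ 2 * (s * b / 2) ^ m / (m.factorial : ℝ) := by
    intro m
    have h1 : ∑' x : ℤ, g (m, x)
        = s ^ m / (m.factorial : ℝ) / 2 ^ m
          * ∑' x : ℤ, (pathCount m x : ℝ) * Real.exp (μ * |(x : ℝ)|) := by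
      rw [← tsum_mul_left]
      congr 1; funext x; simp only [hg_def]; ring
    rw [h1]
    have h2 := key_sum_abs_le m μ
    have hc : 0 ≤ s ^ m / (m.factorial : ℝ) / 2 ^ m := by positivity
    calc s ^ m / (m.factorial : ℝ) / 2 ^ m
          * ∑' x : ℤ, (pathCount m x : ℝ) * Real.exp (μ * |(x : ℝ)|)
        ≤ s ^ m / (m.factorial : ℝ) / 2 ^ m * (2 * b ^ m) := by
          exact mul_le_mul_of_nonneg_left h2 hc
      _ = 2 * (s * b / 2) ^ m / (m.factorial : ℝ) := by
          simp only [mul_div_assoc, mul_pow, div_pow]; ring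
  have hrow_sum : Summable (fun m : ℕ => 2 * (s * b / 2) ^ m / (m.factorial : ℝ)) := by
    have := (Real.summable_pow_div_factorial (s * b / 2)).mul_left 2
    convert this using 2 with m
    exacts [rfl, by ring]
  have hcol_sum : Summable (fun m : ℕ => ∑' x : ℤ, g (m, x)) := by
    refine Summable.of_nonneg_of_le (fun m => tsum_nonneg (fun x => hg0 (m, x)))
      (fun m => hfib_bound m) hrow_sum
  have hg_sum : Summable g :=
    (summable_prod_of_nonneg hg0).mpr ⟨hfib_sum, hcol_sum⟩
  -- sum over the product, column-first
  have hswap_sum : Summable (fun q : ℤ × ℕ => g (q.2, q.1)) := by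
    have : (fun q : ℤ × ℕ => g (q.2, q.1)) = g ∘ (Equiv.prodComm ℤ ℕ) := rfl
    rw [this]
    exact ((Equiv.prodComm ℤ ℕ).summable_iff).mpr hg_sum
  have hcolfib : ∀ x : ℤ, Summable (fun m : ℕ => g (m, x)) :=
    fun x => ((summable_prod_of_nonneg (fun q => hg0 (q.2, q.1))).mp hswap_sum).1 x
  have hHsum0 : Summable (fun x : ℤ => ∑' m : ℕ, g (m, x)) :=
    ((summable_prod_of_nonneg (fun q => hg0 (q.2, q.1))).mp hswap_sum).2
  have hdouble : ∑' x : ℤ, ∑' m : ℕ, g (m, x) = ∑' m : ℕ, ∑' x : ℤ, g (m, x) :=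
    Summable.tsum_comm' (f := fun (m : ℕ) (x : ℤ) => g (m, x)) hg_sum hfib_sum hcolfib
  -- identify srwKernel-based sums
  have hH_eq : ∀ x : ℤ, srwKernel s x * Real.exp (μ * |(x : ℝ)|)
      = Real.exp (-s) * ∑' m : ℕ, g (m, x) := by
    intro x
    rw [srwKernel, mul_assoc]
    congr 1
    rw [← tsum_mul_right]
  have hHsum : Summable (fun x : ℤ => srwKernel s x * Real.exp (μ * |(x : ℝ)|)) := by
    simp only [hH_eq]
    exact hHsum0.mul_left _
  have hHbound : ∑' x : ℤ, srwKernel s x * Real.exp (μ * |(x : ℝ)|)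
      ≤ 2 * Real.exp (s * (b / 2 - 1)) := by
    calc ∑' x : ℤ, srwKernel s x * Real.exp (μ * |(x : ℝ)|)
        = Real.exp (-s) * ∑' x : ℤ, ∑' m : ℕ, g (m, x) := by
          simp only [hH_eq]; rw [tsum_mul_left]
      _ = Real.exp (-s) * ∑' m : ℕ, ∑' x : ℤ, g (m, x) := by rw [hdouble]
      _ ≤ Real.exp (-s) * ∑' m : ℕ, 2 * (s * b / 2) ^ m / (m.factorial : ℝ) := by
          refine mul_le_mul_of_nonneg_left ?_ (Real.exp_pos _).le
          exact Summable.tsum_le_tsum hfib_bound hcol_sum hrow_sum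
      _ = Real.exp (-s) * (2 * Real.exp (s * b / 2)) := by
          congr 1
          rw [← tsum_pow_div_factorial (s * b / 2), ← tsum_mul_left]
          congr 1; funext m; ring
      _ = 2 * Real.exp (s * (b / 2 - 1)) := by
          rw [show s * (b / 2 - 1) = -s + s * b / 2 by ring, Real.exp_add]; ring
  -- exponent bound: s * (b/2 - 1) ≤ T * lam^2 * exp |lam| / 2
  have hb2 : 2 ≤ b := by
    have h1 : Real.exp μ * Real.exp (-μ) = 1 := by
      rw [← Real.exp_add]; simp
    nlinarith [sq_nonneg (Real.exp μ - 1), Real.exp_pos μ, Real.exp_pos (-μ)]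
  have hbμ : b - 2 ≤ μ ^ 2 * Real.exp μ := by
    have h1 : Real.exp μ * Real.exp (-μ) = 1 := by
      rw [← Real.exp_add]; simp
    have h2 : 1 - Real.exp (-μ) ≤ μ := by
      have := Real.add_one_le_exp (-μ); linarith
    have h3 : Real.exp (-μ) ≤ 1 := Real.exp_le_one_iff.mpr (by linarith)
    have h4 : (1 - Real.exp (-μ)) ^ 2 ≤ μ ^ 2 := by nlinarith
    nlinarith [mul_le_mul_of_nonneg_left h4 (Real.exp_pos μ).le, Real.exp_pos (-μ)]
  have hexp_bound : s * (b / 2 - 1) ≤ T * lam ^ 2 * Real.exp |lam| / 2 := by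
    have hμle : μ ≤ |lam| := by
      rw [hμ_def, div_le_iff₀ hnpos]
      nlinarith [abs_nonneg lam]
    have hμsq : μ ^ 2 = lam ^ 2 / n ^ 2 := by
      rw [hμ_def, div_pow, sq_abs]
    have h5 : b - 2 ≤ lam ^ 2 / n ^ 2 * Real.exp |lam| := by
      calc b - 2 ≤ μ ^ 2 * Real.exp μ := hbμ
        _ ≤ lam ^ 2 / n ^ 2 * Real.exp |lam| := by
            rw [hμsq]
            exact mul_le_mul_of_nonneg_left (Real.exp_le_exp.mpr hμle) (by positivity)
    have hsle : s ≤ n ^ 2 * T := by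
      rw [hs_def]
      exact mul_le_mul_of_nonneg_left ht.2 (by positivity)
    calc s * (b / 2 - 1) ≤ (n ^ 2 * T) * (b / 2 - 1) := by
          exact mul_le_mul_of_nonneg_right hsle (by linarith)
      _ ≤ (n ^ 2 * T) * (lam ^ 2 / n ^ 2 * Real.exp |lam| / 2) := by
          refine mul_le_mul_of_nonneg_left (by linarith) (by positivity)
      _ = T * lam ^ 2 * Real.exp |lam| / 2 := by field_simp
  -- pointwise domination
  have hker0 : ∀ x : ℤ, 0 ≤ srwKernel s x := by
    intro x
    rw [srwKernel]
    refine mul_nonneg (Real.exp_pos _).le (tsum_nonneg fun m => ?_)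
    positivity
  have hpt : ∀ x : ℤ, srwKernel s x * Real.exp (-lam * |(x : ℝ) + (k : ℝ)| / n)
      ≤ Real.exp (-lam * |(k : ℝ)| / n) * (srwKernel s x * Real.exp (μ * |(x : ℝ)|)) := by
    intro x
    rw [← mul_assoc, mul_comm (Real.exp (-lam * |(k : ℝ)| / n)) (srwKernel s x), mul_assoc]
    refine mul_le_mul_of_nonneg_left ?_ (hker0 x)
    rw [← Real.exp_add]
    refine Real.exp_le_exp.mpr ?_
    have habs : abs (abs ((x : ℝ) + (k : ℝ)) - abs ((k : ℝ))) ≤ abs ((x : ℝ)) := by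
      have := abs_abs_sub_abs_le_abs_sub ((x : ℝ) + k) (k : ℝ)
      simpa using this
    have h1 : -lam * |(x : ℝ) + (k : ℝ)| ≤ -lam * |(k : ℝ)| + |lam| * |(x : ℝ)| := by
      have h2 : -(lam * ((|(x : ℝ) + (k : ℝ)|) - |(k : ℝ)|)) ≤ |lam| * |(x : ℝ)| := by
        calc -(lam * ((|(x : ℝ) + (k : ℝ)|) - |(k : ℝ)|))
            ≤ |lam * ((|(x : ℝ) + (k : ℝ)|) - |(k : ℝ)|)| := neg_le_abs _
          _ = |lam| * abs ((|(x : ℝ) + (k : ℝ)|) - |(k : ℝ)|) := abs_mul _ _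
          _ ≤ |lam| * |(x : ℝ)| := mul_le_mul_of_nonneg_left habs (abs_nonneg _)
      linarith
    rw [hμ_def]
    calc -lam * |(x : ℝ) + (k : ℝ)| / n ≤ (-lam * |(k : ℝ)| + |lam| * |(x : ℝ)|) / n :=
          div_le_div_of_nonneg_right h1 hnpos.le
      _ = -lam * |(k : ℝ)| / n + |lam| / n * |(x : ℝ)| := by ring
  -- assemble
  have hFsum : Summable (fun x : ℤ =>
      srwKernel s x * Real.exp (-lam * |(x : ℝ) + (k : ℝ)| / n)) := by
    refine Summable.of_nonneg_of_le
      (fun x => mul_nonneg (hker0 x) (Real.exp_pos _).le) hpt (hHsum.mul_left _)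
  calc ∑' x : ℤ, srwKernel s x * Real.exp (-lam * |(x : ℝ) + (k : ℝ)| / n)
      ≤ ∑' x : ℤ, Real.exp (-lam * |(k : ℝ)| / n)
          * (srwKernel s x * Real.exp (μ * |(x : ℝ)|)) :=
        Summable.tsum_le_tsum hpt hFsum (hHsum.mul_left _)
    _ = Real.exp (-lam * |(k : ℝ)| / n)
          * ∑' x : ℤ, srwKernel s x * Real.exp (μ * |(x : ℝ)|) := tsum_mul_left
    _ ≤ Real.exp (-lam * |(k : ℝ)| / n)
          * (2 * Real.exp (T * lam ^ 2 * Real.exp |lam| / 2)) := by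
        refine mul_le_mul_of_nonneg_left ?_ (Real.exp_pos _).le
        calc ∑' x : ℤ, srwKernel s x * Real.exp (μ * |(x : ℝ)|)
            ≤ 2 * Real.exp (s * (b / 2 - 1)) := hHbound
          _ ≤ 2 * Real.exp (T * lam ^ 2 * Real.exp |lam| / 2) := by
              have := Real.exp_le_exp.mpr hexp_bound
              linarith
    _ = 2 * Real.exp (T * lam ^ 2 * Real.exp |lam| / 2)
          * Real.exp (-lam * |(k : ℝ)| / n) := by ring
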